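/- arXiv:2405.12615 — 2 statements merged into one kernel-verified Lean document; each statement's English description precedes it below -/
import Mathlib

section
/- Let T be a transition kernel with independent transitions, T(s' | s, a) = ∏_{j=1}^{n_s} T_j(s'_j | s, a). For any two full-support joint probability mass functions p and q on (S, A, S') that are both consistent with T, and for every current-step coordinate X_i ∈ (S, A) and every next-step coordinate S'_j, the conditional independence X_i ⊥_p S'_j | ((S, A) \ {X_i}) holds if and only if X_i ⊥_q S'_j | ((S, A) \ {X_i}) holds. Hence the bipartite graph obtained by declaring X_i a parent of S'_j exactly when this conditional independence fails is the same for every consistent full-support distribution, i.e. it is the unique ground-truth causal graph identified by the conditional-independence rule. -/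
open Finset

noncomputable section

/-- Marginal probability that a configuration agrees with `x` on the coordinates in `E`. -/
def marg {V : Type*} [Fintype V] [DecidableEq V] {val : V → Type*}
    [∀ v, Fintype (val v)] [∀ v, DecidableEq (val v)]
    (p : (∀ v, val v) → ℝ) (E : Finset V) (x : ∀ v, val v) : ℝ :=
  ∑ y : ∀ v, val v, if ∀ v ∈ E, y v = x v then p y else 0

/-- Conditional probability of the value of coordinate `v` given the values of `P`. -/
def condP {V : Type*} [Fintype V] [DecidableEq V] {val : V → Type*}
    [∀ v, Fintype (val v)] [∀ v, DecidableEq (val v)]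
    (p : (∀ v, val v) → ℝ) (v : V) (P : Finset V) (x : ∀ v, val v) : ℝ :=
  marg p (insert v P) x / marg p P x

/-- Conditional independence X ⊥ Y | Z, in cross-multiplied form. -/
def CondIndep {V : Type*} [Fintype V] [DecidableEq V] {val : V → Type*}
    [∀ v, Fintype (val v)] [∀ v, DecidableEq (val v)]
    (p : (∀ v, val v) → ℝ) (X Y Z : Finset V) : Prop :=
  ∀ x : ∀ v, val v,
    marg p (X ∪ Y ∪ Z) x * marg p Z x = marg p (X ∪ Z) x * marg p (Y ∪ Z) x

/-- Variables of an FMDP: states, actions, next states. -/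
abbrev FVar (ns na : ℕ) := Fin ns ⊕ (Fin na ⊕ Fin ns)

/-- Value types of FMDP variables. -/
def fv {ns na : ℕ} (Sv : Fin ns → Type) (Av : Fin na → Type) : FVar ns na → Type :=
  Sum.elim Sv (Sum.elim Av Sv)

instance {ns na : ℕ} (Sv : Fin ns → Type) (Av : Fin na → Type)
    [∀ i, Fintype (Sv i)] [∀ j, Fintype (Av j)] : ∀ v, Fintype (fv Sv Av v)
  | .inl i => inferInstanceAs (Fintype (Sv i))
  | .inr (.inl j) => inferInstanceAs (Fintype (Av j))
  | .inr (.inr k) => inferInstanceAs (Fintype (Sv k))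

instance {ns na : ℕ} (Sv : Fin ns → Type) (Av : Fin na → Type)
    [∀ i, DecidableEq (Sv i)] [∀ j, DecidableEq (Av j)] : ∀ v, DecidableEq (fv Sv Av v)
  | .inl i => inferInstanceAs (DecidableEq (Sv i))
  | .inr (.inl j) => inferInstanceAs (DecidableEq (Av j))
  | .inr (.inr k) => inferInstanceAs (DecidableEq (Sv k))

/-- The set of current-step coordinates. -/
def curSet (ns na : ℕ) : Finset (FVar ns na) :=
  (Finset.univ.image (Sum.inl : Fin ns → FVar ns na)) ∪
    (Finset.univ.image (fun j : Fin na => (Sum.inr (Sum.inl j) : FVar ns na)))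

/-- A joint pmf `p` on (S, A, S') is consistent with the transition kernel `T`. -/
def FConsistent {ns na : ℕ} {Sv : Fin ns → Type} {Av : Fin na → Type}
    [∀ i, Fintype (Sv i)] [∀ j, Fintype (Av j)]
    [∀ i, DecidableEq (Sv i)] [∀ j, DecidableEq (Av j)]
    (p : (∀ v, fv Sv Av v) → ℝ)
    (T : (∀ i, Sv i) → (∀ j, Av j) → (∀ k, Sv k) → ℝ) : Prop :=
  ∀ x, p x = marg p (curSet ns na) x *
    T (fun i => x (.inl i)) (fun j => x (.inr (.inl j))) (fun k => x (.inr (.inr k)))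

/-- Current-step coordinates of an FMDP: state variables and action variables. -/
abbrev CurVar (ns na : ℕ) := Fin ns ⊕ Fin na

/-- Embedding of current-step coordinates into the full variable set. -/
def liftCur {ns na : ℕ} : CurVar ns na → FVar ns na :=
  Sum.elim Sum.inl (fun j => Sum.inr (Sum.inl j))



/-- general reindexing helper -/
lemma sum_ite_update {ι : Type*} [Fintype ι] [DecidableEq ι] {β : ι → Type*}
    [∀ i, Fintype (β i)] [∀ i, DecidableEq (β i)] (z : ∀ i, β i) (i : ι)
    (G : (∀ i, β i) → ℝ) :
    ∑ s : ∀ i, β i, (if ∀ i', i' ≠ i → s i' = z i' then G s else 0)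
      = ∑ v : β i, G (Function.update z i v) := by
  rw [← Finset.sum_filter]
  have himg : Finset.univ.filter (fun s : ∀ i, β i => ∀ i', i' ≠ i → s i' = z i')
      = Finset.univ.image (fun v : β i => Function.update z i v) := by
    ext s
    simp only [Finset.mem_filter, Finset.mem_univ, true_and, Finset.mem_image]
    constructor
    · intro hs
      refine ⟨s i, funext fun i' => ?_⟩
      rcases eq_or_ne i' i with rfl | h
      · simp
      · rw [Function.update_of_ne h, hs i' h]
    · rintro ⟨v, rfl⟩ i' h
      rw [Function.update_of_ne h]
  rw [himg, Finset.sum_image]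
  intro v _ w _ h
  have := congrFun h i
  simpa using this

set_option linter.unusedSectionVars false

section Aux

variable {ns na : ℕ} {Sv : Fin ns → Type} {Av : Fin na → Type}
  [∀ i, Fintype (Sv i)] [∀ j, Fintype (Av j)]
  [∀ i, DecidableEq (Sv i)] [∀ j, DecidableEq (Av j)]

def glue (s : ∀ i, Sv i) (a : ∀ j, Av j) (t : ∀ k, Sv k) : ∀ v, fv Sv Av v
  | .inl i => s i
  | .inr (.inl j) => a j
  | .inr (.inr k) => t k

@[simp] lemma glue_inl (s : ∀ i, Sv i) (a : ∀ j, Av j) (t : ∀ k, Sv k) (i : Fin ns) :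
    glue s a t (.inl i) = s i := rfl

@[simp] lemma glue_inrl (s : ∀ i, Sv i) (a : ∀ j, Av j) (t : ∀ k, Sv k) (j : Fin na) :
    glue s a t (.inr (.inl j)) = a j := rfl

@[simp] lemma glue_fst (s : ∀ i, Sv i) (a : ∀ j, Av j) (t : ∀ k, Sv k) :
    (fun i => glue s a t (.inl i)) = s := rfl

@[simp] lemma glue_snd (s : ∀ i, Sv i) (a : ∀ j, Av j) (t : ∀ k, Sv k) :
    (fun j => glue s a t (.inr (.inl j))) = a := rfl

@[simp] lemma glue_thd (s : ∀ i, Sv i) (a : ∀ j, Av j) (t : ∀ k, Sv k) :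
    (fun k => glue s a t (.inr (.inr k))) = t := rfl

@[simp] lemma glue_thd' (s : ∀ i, Sv i) (a : ∀ j, Av j) (t : ∀ k, Sv k) (k : Fin ns) :
    glue s a t (.inr (.inr k)) = t k := rfl

def fvEquiv : ((∀ i, Sv i) × (∀ j, Av j) × (∀ k, Sv k)) ≃ (∀ v, fv Sv Av v) where
  toFun c := glue c.1 c.2.1 c.2.2
  invFun x :=
    (fun i => x (.inl i), fun j => x (.inr (.inl j)), fun k => x (.inr (.inr k)))
  left_inv c := rfl
  right_inv x := funext fun v => by
    cases v with
    | inl i => rfl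
    | inr w => cases w <;> rfl

lemma sum_glue (f : (∀ v, fv Sv Av v) → ℝ) :
    ∑ y, f y = ∑ s, ∑ a, ∑ t, f (glue s a t) := by
  rw [← (fvEquiv (Sv := Sv) (Av := Av)).sum_comp f, Fintype.sum_prod_type]
  refine Finset.sum_congr rfl fun s _ => ?_
  exact Fintype.sum_prod_type _

lemma forall_curSet (P : FVar ns na → Prop) :
    (∀ v ∈ curSet ns na, P v) ↔ ((∀ i, P (.inl i)) ∧ ∀ j, P (.inr (.inl j))) := by
  simp only [curSet, Finset.mem_union, Finset.mem_image, Finset.mem_univ, true_and]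
  aesop

lemma liftCur_mem (u : CurVar ns na) : liftCur u ∈ curSet ns na := by
  cases u <;> simp [curSet, liftCur]

lemma next_not_mem (k : Fin ns) : (.inr (.inr k) : FVar ns na) ∉ curSet ns na := by
  simp [curSet]

lemma liftCur_ne (u : CurVar ns na) (k : Fin ns) :
    liftCur u ≠ (.inr (.inr k) : FVar ns na) := by
  cases u <;> simp [liftCur]

end Aux

section Aux2

variable {ns na : ℕ} {Sv : Fin ns → Type} {Av : Fin na → Type}
  [∀ i, Fintype (Sv i)] [∀ j, Fintype (Av j)]
  [∀ i, DecidableEq (Sv i)] [∀ j, DecidableEq (Av j)]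
  [∀ i, Nonempty (Sv i)] [∀ j, Nonempty (Av j)]

def Mp (p : (∀ v, fv Sv Av v) → ℝ) (s : ∀ i, Sv i) (a : ∀ j, Av j) : ℝ :=
  ∑ t, p (glue s a t)

lemma Mp_pos (p : (∀ v, fv Sv Av v) → ℝ) (hp : ∀ x, 0 < p x) (s : ∀ i, Sv i)
    (a : ∀ j, Av j) : 0 < Mp p s a :=
  Finset.sum_pos (fun t _ => hp _) Finset.univ_nonempty

lemma marg_curSet (p : (∀ v, fv Sv Av v) → ℝ) (x : ∀ v, fv Sv Av v) :
    marg p (curSet ns na) x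
      = Mp p (fun i => x (.inl i)) (fun j => x (.inr (.inl j))) := by
  rw [marg, sum_glue (f := fun y => if ∀ v ∈ curSet ns na, y v = x v then p y else 0)]
  have hcond : ∀ (s : ∀ i, Sv i) (a : ∀ j, Av j) (t : ∀ k, Sv k),
      (∀ v ∈ curSet ns na, glue s a t v = x v)
        ↔ (s = (fun i => x (.inl i)) ∧ a = fun j => x (.inr (.inl j))) := by
    intro s a t
    rw [forall_curSet]
    simp [funext_iff]
    rw [funext_iff (f := s) (g := fun i => x (.inl i)), funext_iff (f := a) (g := fun j => x (.inr (.inl j)))]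
    exact Iff.rfl
  obtain ⟨xs, hxs⟩ : ∃ xs : ∀ i, Sv i, ∀ i, x (.inl i) = xs i := ⟨_, fun _ => rfl⟩
  obtain ⟨xa, hxa⟩ : ∃ xa : ∀ j, Av j, ∀ j, x (.inr (.inl j)) = xa j := ⟨_, fun _ => rfl⟩
  simp only [hxs, hxa] at hcond ⊢
  simp only [hcond, ite_and, Finset.sum_ite_irrel, Finset.sum_const_zero,
    Finset.sum_ite_eq', Finset.mem_univ, if_true]
  rfl

end Aux2

section Aux3

variable {ns na : ℕ} {Sv : Fin ns → Type} {Av : Fin na → Type}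
  [∀ i, Fintype (Sv i)] [∀ j, Fintype (Av j)]
  [∀ i, DecidableEq (Sv i)] [∀ j, DecidableEq (Av j)]
  [∀ i, Nonempty (Sv i)] [∀ j, Nonempty (Av j)]
  {T : (∀ i, Sv i) → (∀ j, Av j) → (∀ k, Sv k) → ℝ}
  {Tj : ∀ k : Fin ns, (∀ i, Sv i) × (∀ j, Av j) → Sv k → ℝ}

lemma sumOut (hTj1 : ∀ k c, ∑ y, Tj k c y = 1) (c : (∀ i, Sv i) × (∀ j, Av j))
    (k : Fin ns) (y₀ : Sv k) :
    ∑ t : ∀ k, Sv k, (if t k = y₀ then ∏ j, Tj j c (t j) else 0) = Tj k c y₀ := by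
  classical
  set f : ∀ j : Fin ns, Sv j → ℝ :=
    Function.update (fun j (y : Sv j) => Tj j c y) k
      (fun y => if y = y₀ then Tj k c y else 0) with hf
  have hswap := Fintype.prod_sum f
  have hL : ∏ j, ∑ y, f j y = Tj k c y₀ := by
    rw [Finset.prod_eq_single k]
    · rw [hf, Function.update_self]
      simp
    · intro j _ hj
      rw [hf, Function.update_of_ne hj]
      exact hTj1 j c
    · intro h; exact absurd (Finset.mem_univ k) h
  have hR : ∀ t : ∀ k, Sv k,
      ∏ j, f j (t j) = if t k = y₀ then ∏ j, Tj j c (t j) else 0 := by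
    intro t
    by_cases h : t k = y₀
    · rw [if_pos h]
      refine Finset.prod_congr rfl fun j _ => ?_
      rcases eq_or_ne j k with rfl | hj
      · rw [hf, Function.update_self, if_pos h]
      · rw [hf, Function.update_of_ne hj]
    · rw [if_neg h]
      refine Finset.prod_eq_zero (Finset.mem_univ k) ?_
      rw [hf, Function.update_self, if_neg h]
  calc ∑ t : ∀ k, Sv k, (if t k = y₀ then ∏ j, Tj j c (t j) else 0)
      = ∑ t : ∀ k, Sv k, ∏ j, f j (t j) := by
        exact Finset.sum_congr rfl fun t _ => (hR t).symm
    _ = ∏ j, ∑ y, f j y := hswap.symm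
    _ = Tj k c y₀ := hL

lemma sum_t (p : (∀ v, fv Sv Av v) → ℝ) (hpcons : FConsistent p T)
    (hind : ∀ s a s', T s a s' = ∏ k, Tj k (s, a) (s' k))
    (hTj1 : ∀ k c, ∑ y, Tj k c y = 1)
    (s : ∀ i, Sv i) (a : ∀ j, Av j) (k : Fin ns) (y₀ : Sv k) :
    ∑ t, (if t k = y₀ then p (glue s a t) else 0)
      = Mp p s a * Tj k (s, a) y₀ := by
  have hp : ∀ t, p (glue s a t) = Mp p s a * T s a t := by
    intro t
    rw [hpcons (glue s a t), marg_curSet]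
    rfl
  calc ∑ t, (if t k = y₀ then p (glue s a t) else 0)
      = ∑ t : ∀ k, Sv k, Mp p s a * (if t k = y₀ then ∏ j, Tj j (s, a) (t j) else 0) := by
        refine Finset.sum_congr rfl fun t _ => ?_
        rw [hp t, hind]
        split <;> ring
    _ = Mp p s a * Tj k (s, a) y₀ := by
        rw [← Finset.mul_sum, sumOut hTj1]

lemma marg_insert (p : (∀ v, fv Sv Av v) → ℝ) (hpcons : FConsistent p T)
    (hind : ∀ s a s', T s a s' = ∏ k, Tj k (s, a) (s' k))
    (hTj1 : ∀ k c, ∑ y, Tj k c y = 1) (k : Fin ns) (x : ∀ v, fv Sv Av v) :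
    marg p (insert (.inr (.inr k)) (curSet ns na)) x
      = Mp p (fun i => x (.inl i)) (fun j => x (.inr (.inl j))) *
          Tj k (fun i => x (.inl i), fun j => x (.inr (.inl j))) (x (.inr (.inr k))) := by
  rw [marg, sum_glue (f := fun y => if ∀ v ∈ insert (.inr (.inr k)) (curSet ns na),
    y v = x v then p y else 0)]
  have hcond : ∀ (s : ∀ i, Sv i) (a : ∀ j, Av j) (t : ∀ k, Sv k),
      (∀ v ∈ insert (.inr (.inr k) : FVar ns na) (curSet ns na), glue s a t v = x v)
        ↔ ((s = (fun i => x (.inl i)) ∧ a = fun j => x (.inr (.inl j)))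
            ∧ t k = x (.inr (.inr k))) := by
    intro s a t
    rw [Finset.forall_mem_insert, forall_curSet]
    simp [funext_iff]
    rw [funext_iff (f := s) (g := fun i => x (.inl i)), funext_iff (f := a) (g := fun j => x (.inr (.inl j)))]
    tauto
  obtain ⟨xs, hxs⟩ : ∃ xs : ∀ i, Sv i, ∀ i, x (.inl i) = xs i := ⟨_, fun _ => rfl⟩
  obtain ⟨xa, hxa⟩ : ∃ xa : ∀ j, Av j, ∀ j, x (.inr (.inl j)) = xa j := ⟨_, fun _ => rfl⟩
  obtain ⟨xk, hxk⟩ : ∃ xk : Sv k, x (.inr (.inr k)) = xk := ⟨_, rfl⟩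
  simp only [hxs, hxa, hxk] at hcond ⊢
  simp only [hcond, ite_and, Finset.sum_ite_irrel, Finset.sum_const_zero,
    Finset.sum_ite_eq', Finset.mem_univ, if_true]
  exact sum_t p hpcons hind hTj1 _ _ k _

end Aux3

section Aux4

variable {ns na : ℕ} {Sv : Fin ns → Type} {Av : Fin na → Type}
  [∀ i, Fintype (Sv i)] [∀ j, Fintype (Av j)]
  [∀ i, DecidableEq (Sv i)] [∀ j, DecidableEq (Av j)]
  [∀ i, Nonempty (Sv i)] [∀ j, Nonempty (Av j)]
  {T : (∀ i, Sv i) → (∀ j, Av j) → (∀ k, Sv k) → ℝ}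
  {Tj : ∀ k : Fin ns, (∀ i, Sv i) × (∀ j, Av j) → Sv k → ℝ}

lemma ite_congr_inst {c₁ c₂ : Prop} {i₁ : Decidable c₁} {i₂ : Decidable c₂} {a b c d : ℝ}
    (h : c₁ ↔ c₂) (h2 : a = c) (h3 : b = d) :
    @ite _ c₁ i₁ a b = @ite _ c₂ i₂ c d := by
  subst h2 h3
  cases propext h
  cases Subsingleton.elim i₁ i₂
  rfl

lemma forall_mem_sdiff_singleton {α : Type*} [DecidableEq α] (A : Finset α) (u : α)
    (P : α → Prop) : (∀ v ∈ A \ {u}, P v) ↔ ∀ v ∈ A, v ≠ u → P v := by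
  simp only [Finset.mem_sdiff, Finset.mem_singleton, and_imp]

lemma marg_sdiff_inl (p : (∀ v, fv Sv Av v) → ℝ) (i : Fin ns) (x : ∀ v, fv Sv Av v) :
    marg p (curSet ns na \ {(.inl i : FVar ns na)}) x
      = ∑ v : Sv i, Mp p (Function.update (fun i' => x (.inl i')) i v)
          (fun j => x (.inr (.inl j))) := by
  rw [marg, sum_glue (f := fun y =>
    if ∀ v ∈ curSet ns na \ {(.inl i : FVar ns na)}, y v = x v then p y else 0)]
  have hcond : ∀ (s : ∀ i, Sv i) (a : ∀ j, Av j) (t : ∀ k, Sv k),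
      (∀ v ∈ curSet ns na \ {(.inl i : FVar ns na)}, glue s a t v = x v)
        ↔ ((a = fun j => x (.inr (.inl j)))
            ∧ ∀ i', i' ≠ i → s i' = x (.inl i')) := by
    intro s a t
    rw [forall_mem_sdiff_singleton, forall_curSet]
    simp [funext_iff] <;> rw [funext_iff (f := a) (g := fun j => x (.inr (.inl j)))] <;> tauto
  obtain ⟨xs, hxs⟩ : ∃ xs : ∀ i, Sv i, ∀ i, x (.inl i) = xs i := ⟨_, fun _ => rfl⟩
  obtain ⟨xa, hxa⟩ : ∃ xa : ∀ j, Av j, ∀ j, x (.inr (.inl j)) = xa j := ⟨_, fun _ => rfl⟩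
  simp only [hxs, hxa] at hcond ⊢
  simp only [hcond, ite_and, Finset.sum_ite_irrel, Finset.sum_const_zero,
    Finset.sum_ite_eq', Finset.mem_univ, if_true]
  refine Eq.trans ?_ (sum_ite_update xs i
    (fun s => Mp p s xa))
  exact Finset.sum_congr rfl fun s _ => ite_congr_inst Iff.rfl rfl rfl

lemma marg_insert_sdiff_inl (p : (∀ v, fv Sv Av v) → ℝ) (hpcons : FConsistent p T)
    (hind : ∀ s a s', T s a s' = ∏ k, Tj k (s, a) (s' k))
    (hTj1 : ∀ k c, ∑ y, Tj k c y = 1) (k : Fin ns) (i : Fin ns) (x : ∀ v, fv Sv Av v) :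
    marg p (insert (.inr (.inr k)) (curSet ns na \ {(.inl i : FVar ns na)})) x
      = ∑ v : Sv i, Mp p (Function.update (fun i' => x (.inl i')) i v)
            (fun j => x (.inr (.inl j))) *
          Tj k (Function.update (fun i' => x (.inl i')) i v, fun j => x (.inr (.inl j)))
            (x (.inr (.inr k))) := by
  rw [marg, sum_glue (f := fun y =>
    if ∀ v ∈ insert (.inr (.inr k)) (curSet ns na \ {(.inl i : FVar ns na)}),
      y v = x v then p y else 0)]
  have hcond : ∀ (s : ∀ i, Sv i) (a : ∀ j, Av j) (t : ∀ k, Sv k),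
      (∀ v ∈ insert (.inr (.inr k) : FVar ns na) (curSet ns na \ {(.inl i : FVar ns na)}),
          glue s a t v = x v)
        ↔ (((a = fun j => x (.inr (.inl j)))
            ∧ ∀ i', i' ≠ i → s i' = x (.inl i'))
            ∧ t k = x (.inr (.inr k))) := by
    intro s a t
    rw [Finset.forall_mem_insert, forall_mem_sdiff_singleton, forall_curSet]
    simp [funext_iff] <;> rw [funext_iff (f := a) (g := fun j => x (.inr (.inl j)))] <;> tauto
  obtain ⟨xs, hxs⟩ : ∃ xs : ∀ i, Sv i, ∀ i, x (.inl i) = xs i := ⟨_, fun _ => rfl⟩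
  obtain ⟨xa, hxa⟩ : ∃ xa : ∀ j, Av j, ∀ j, x (.inr (.inl j)) = xa j := ⟨_, fun _ => rfl⟩
  obtain ⟨xk, hxk⟩ : ∃ xk : Sv k, x (.inr (.inr k)) = xk := ⟨_, rfl⟩
  simp only [hxs, hxa, hxk] at hcond ⊢
  simp only [hcond, ite_and, Finset.sum_ite_irrel, Finset.sum_const_zero,
    Finset.sum_ite_eq', Finset.mem_univ, if_true]
  simp only [sum_t p hpcons hind hTj1]
  refine Eq.trans ?_ (sum_ite_update xs i
    (fun s => Mp p s xa *
      Tj k (s, xa) xk))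
  exact Finset.sum_congr rfl fun s _ => ite_congr_inst Iff.rfl rfl rfl

lemma marg_sdiff_inr (p : (∀ v, fv Sv Av v) → ℝ) (j : Fin na) (x : ∀ v, fv Sv Av v) :
    marg p (curSet ns na \ {(.inr (.inl j) : FVar ns na)}) x
      = ∑ v : Av j, Mp p (fun i => x (.inl i))
          (Function.update (fun j' => x (.inr (.inl j'))) j v) := by
  rw [marg, sum_glue (f := fun y =>
    if ∀ v ∈ curSet ns na \ {(.inr (.inl j) : FVar ns na)}, y v = x v then p y else 0)]
  have hcond : ∀ (s : ∀ i, Sv i) (a : ∀ j, Av j) (t : ∀ k, Sv k),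
      (∀ v ∈ curSet ns na \ {(.inr (.inl j) : FVar ns na)}, glue s a t v = x v)
        ↔ ((s = fun i => x (.inl i))
            ∧ ∀ j', j' ≠ j → a j' = x (.inr (.inl j'))) := by
    intro s a t
    rw [forall_mem_sdiff_singleton, forall_curSet]
    simp [funext_iff] <;> rw [funext_iff (f := s) (g := fun i => x (.inl i))] <;> tauto
  obtain ⟨xs, hxs⟩ : ∃ xs : ∀ i, Sv i, ∀ i, x (.inl i) = xs i := ⟨_, fun _ => rfl⟩
  obtain ⟨xa, hxa⟩ : ∃ xa : ∀ j, Av j, ∀ j, x (.inr (.inl j)) = xa j := ⟨_, fun _ => rfl⟩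
  simp only [hxs, hxa] at hcond ⊢
  simp only [hcond, ite_and, Finset.sum_ite_irrel, Finset.sum_const_zero,
    Finset.sum_ite_eq', Finset.mem_univ, if_true]
  refine Eq.trans ?_ (sum_ite_update xa j
    (fun a => Mp p xs a))
  exact Finset.sum_congr rfl fun a _ => ite_congr_inst Iff.rfl rfl rfl

lemma marg_insert_sdiff_inr (p : (∀ v, fv Sv Av v) → ℝ) (hpcons : FConsistent p T)
    (hind : ∀ s a s', T s a s' = ∏ k, Tj k (s, a) (s' k))
    (hTj1 : ∀ k c, ∑ y, Tj k c y = 1) (k : Fin ns) (j : Fin na) (x : ∀ v, fv Sv Av v) :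
    marg p (insert (.inr (.inr k)) (curSet ns na \ {(.inr (.inl j) : FVar ns na)})) x
      = ∑ v : Av j, Mp p (fun i => x (.inl i))
            (Function.update (fun j' => x (.inr (.inl j'))) j v) *
          Tj k (fun i => x (.inl i), Function.update (fun j' => x (.inr (.inl j'))) j v)
            (x (.inr (.inr k))) := by
  rw [marg, sum_glue (f := fun y =>
    if ∀ v ∈ insert (.inr (.inr k)) (curSet ns na \ {(.inr (.inl j) : FVar ns na)}),
      y v = x v then p y else 0)]
  have hcond : ∀ (s : ∀ i, Sv i) (a : ∀ j, Av j) (t : ∀ k, Sv k),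
      (∀ v ∈ insert (.inr (.inr k) : FVar ns na)
          (curSet ns na \ {(.inr (.inl j) : FVar ns na)}), glue s a t v = x v)
        ↔ (((s = fun i => x (.inl i))
            ∧ ∀ j', j' ≠ j → a j' = x (.inr (.inl j')))
            ∧ t k = x (.inr (.inr k))) := by
    intro s a t
    rw [Finset.forall_mem_insert, forall_mem_sdiff_singleton, forall_curSet]
    simp [funext_iff] <;> rw [funext_iff (f := s) (g := fun i => x (.inl i))] <;> tauto
  obtain ⟨xs, hxs⟩ : ∃ xs : ∀ i, Sv i, ∀ i, x (.inl i) = xs i := ⟨_, fun _ => rfl⟩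
  obtain ⟨xa, hxa⟩ : ∃ xa : ∀ j, Av j, ∀ j, x (.inr (.inl j)) = xa j := ⟨_, fun _ => rfl⟩
  obtain ⟨xk, hxk⟩ : ∃ xk : Sv k, x (.inr (.inr k)) = xk := ⟨_, rfl⟩
  simp only [hxs, hxa, hxk] at hcond ⊢
  simp only [hcond, ite_and, Finset.sum_ite_irrel, Finset.sum_const_zero,
    Finset.sum_ite_eq', Finset.mem_univ, if_true]
  simp only [sum_t p hpcons hind hTj1]
  refine Eq.trans ?_ (sum_ite_update xa j
    (fun a => Mp p xs a *
      Tj k (xs, a) xk))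
  exact Finset.sum_congr rfl fun a _ => ite_congr_inst Iff.rfl rfl rfl

end Aux4

section Aux5

variable {ns na : ℕ} {Sv : Fin ns → Type} {Av : Fin na → Type}
  [∀ i, Fintype (Sv i)] [∀ j, Fintype (Av j)]
  [∀ i, DecidableEq (Sv i)] [∀ j, DecidableEq (Av j)]
  [∀ i, Nonempty (Sv i)] [∀ j, Nonempty (Av j)]
  {T : (∀ i, Sv i) → (∀ j, Av j) → (∀ k, Sv k) → ℝ}
  {Tj : ∀ k : Fin ns, (∀ i, Sv i) × (∀ j, Av j) → Sv k → ℝ}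

def updS (s : ∀ i, Sv i) (a : ∀ j, Av j) :
    ∀ u : CurVar ns na, fv Sv Av (liftCur u) → ((∀ i, Sv i) × (∀ j, Av j))
  | .inl i, v => (Function.update s i v, a)
  | .inr j, v => (s, Function.update a j v)

lemma key (p : (∀ v, fv Sv Av v) → ℝ) (hppos : ∀ x, 0 < p x)
    (hpcons : FConsistent p T)
    (hind : ∀ s a s', T s a s' = ∏ k, Tj k (s, a) (s' k))
    (hTj1 : ∀ k c, ∑ y, Tj k c y = 1) (u : CurVar ns na) (k : Fin ns) :
    CondIndep p {liftCur u} {(.inr (.inr k) : FVar ns na)}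
        (curSet ns na \ {liftCur u}) ↔
      ∀ (s : ∀ i, Sv i) (a : ∀ j, Av j) (v : fv Sv Av (liftCur u)) (y : Sv k),
        Tj k (updS s a u v) y = Tj k (s, a) y := by
  have h2 : {liftCur u} ∪ (curSet ns na \ {liftCur u}) = curSet ns na :=
    Finset.union_sdiff_of_subset (Finset.singleton_subset_iff.2 (liftCur_mem u))
  have h1 : {liftCur u} ∪ {(.inr (.inr k) : FVar ns na)} ∪ (curSet ns na \ {liftCur u})
      = insert (.inr (.inr k)) (curSet ns na) := by
    calc {liftCur u} ∪ {(.inr (.inr k) : FVar ns na)} ∪ (curSet ns na \ {liftCur u})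
        = ({liftCur u} ∪ (curSet ns na \ {liftCur u})) ∪ {(.inr (.inr k) : FVar ns na)} :=
          Finset.union_right_comm _ _ _
      _ = curSet ns na ∪ {(.inr (.inr k) : FVar ns na)} := by rw [h2]
      _ = insert (.inr (.inr k)) (curSet ns na) := by
          rw [Finset.union_comm, ← Finset.insert_eq]
  have h3 : {(.inr (.inr k) : FVar ns na)} ∪ (curSet ns na \ {liftCur u})
      = insert (.inr (.inr k)) (curSet ns na \ {liftCur u}) :=
    (Finset.insert_eq _ _).symm
  cases u with
  | inl i =>
    simp only [liftCur, Sum.elim_inl] at h1 h2 h3 ⊢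
    constructor
    · intro h s a v y
      have hW : ∀ (s : ∀ i, Sv i) (a : ∀ j, Av j),
          0 < ∑ w : Sv i, Mp p (Function.update s i w) a :=
        fun s a => Finset.sum_pos (fun w _ => Mp_pos p hppos _ _) Finset.univ_nonempty
      have hkey : ∀ (s : ∀ i, Sv i) (a : ∀ j, Av j) (y : Sv k),
          Tj k (s, a) y * (∑ w : Sv i, Mp p (Function.update s i w) a)
            = ∑ w : Sv i, Mp p (Function.update s i w) a *
                Tj k (Function.update s i w, a) y := by
        intro s a y
        have hx := h (glue s a (Function.update (fun k0 => Classical.arbitrary (Sv k0)) k y))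
        rw [h1, h2, h3, marg_curSet, marg_insert p hpcons hind hTj1,
          marg_sdiff_inl, marg_insert_sdiff_inl p hpcons hind hTj1] at hx
        simp only [glue_fst, glue_snd, glue_thd', Function.update_self] at hx
        refine mul_left_cancel₀ (Mp_pos p hppos s a).ne' ?_
        rw [← mul_assoc]
        exact hx
      have e1 := hkey s a y
      have e2 := hkey (Function.update s i v) a y
      simp only [Function.update_idem (β := Sv) (a := i) (v := v) (f := s)] at e2
      have := e2.trans e1.symm
      simpa only [updS] using mul_right_cancel₀ (hW s a).ne' this
    · intro h x
      rw [h1, h2, h3, marg_curSet, marg_insert p hpcons hind hTj1,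
        marg_sdiff_inl, marg_insert_sdiff_inl p hpcons hind hTj1]
      have hc : ∀ w : Sv i,
          Tj k (Function.update (fun i' => x (.inl i')) i w,
            fun j => x (.inr (.inl j))) (x (.inr (.inr k)))
          = Tj k (fun i' => x (.inl i'), fun j => x (.inr (.inl j)))
              (x (.inr (.inr k))) := by
        intro w
        simpa only [updS] using
          h (fun i' => x (.inl i')) (fun j => x (.inr (.inl j))) w (x (.inr (.inr k)))
      have hsum : ∑ w : Sv i, Mp p (Function.update (fun i' => x (.inl i')) i w)
            (fun j => x (.inr (.inl j))) *
            Tj k (Function.update (fun i' => x (.inl i')) i w,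
              fun j => x (.inr (.inl j))) (x (.inr (.inr k)))
          = (∑ w : Sv i, Mp p (Function.update (fun i' => x (.inl i')) i w)
              (fun j => x (.inr (.inl j)))) *
            Tj k (fun i' => x (.inl i'), fun j => x (.inr (.inl j)))
              (x (.inr (.inr k))) := by
        rw [Finset.sum_mul]
        exact Finset.sum_congr rfl fun w _ => by rw [hc w]
      rw [hsum]
      ring
  | inr j =>
    simp only [liftCur, Sum.elim_inr] at h1 h2 h3 ⊢
    constructor
    · intro h s a v y
      have hW : ∀ (s : ∀ i, Sv i) (a : ∀ j, Av j),
          0 < ∑ w : Av j, Mp p s (Function.update a j w) :=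
        fun s a => Finset.sum_pos (fun w _ => Mp_pos p hppos _ _) Finset.univ_nonempty
      have hkey : ∀ (s : ∀ i, Sv i) (a : ∀ j, Av j) (y : Sv k),
          Tj k (s, a) y * (∑ w : Av j, Mp p s (Function.update a j w))
            = ∑ w : Av j, Mp p s (Function.update a j w) *
                Tj k (s, Function.update a j w) y := by
        intro s a y
        have hx := h (glue s a (Function.update (fun k0 => Classical.arbitrary (Sv k0)) k y))
        rw [h1, h2, h3, marg_curSet, marg_insert p hpcons hind hTj1,
          marg_sdiff_inr, marg_insert_sdiff_inr p hpcons hind hTj1] at hx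
        simp only [glue_fst, glue_snd, glue_thd', Function.update_self] at hx
        refine mul_left_cancel₀ (Mp_pos p hppos s a).ne' ?_
        rw [← mul_assoc]
        exact hx
      have e1 := hkey s a y
      have e2 := hkey s (Function.update a j v) y
      simp only [Function.update_idem (β := Av) (a := j) (v := v) (f := a)] at e2
      have := e2.trans e1.symm
      simpa only [updS] using mul_right_cancel₀ (hW s a).ne' this
    · intro h x
      rw [h1, h2, h3, marg_curSet, marg_insert p hpcons hind hTj1,
        marg_sdiff_inr, marg_insert_sdiff_inr p hpcons hind hTj1]
      have hc : ∀ w : Av j,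
          Tj k (fun i => x (.inl i),
            Function.update (fun j' => x (.inr (.inl j'))) j w) (x (.inr (.inr k)))
          = Tj k (fun i => x (.inl i), fun j' => x (.inr (.inl j')))
              (x (.inr (.inr k))) := by
        intro w
        simpa only [updS] using
          h (fun i => x (.inl i)) (fun j' => x (.inr (.inl j'))) w (x (.inr (.inr k)))
      have hsum : ∑ w : Av j, Mp p (fun i => x (.inl i))
            (Function.update (fun j' => x (.inr (.inl j'))) j w) *
            Tj k (fun i => x (.inl i),
              Function.update (fun j' => x (.inr (.inl j'))) j w) (x (.inr (.inr k)))
          = (∑ w : Av j, Mp p (fun i => x (.inl i))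
              (Function.update (fun j' => x (.inr (.inl j'))) j w)) *
            Tj k (fun i => x (.inl i), fun j' => x (.inr (.inl j')))
              (x (.inr (.inr k))) := by
        rw [Finset.sum_mul]
        exact Finset.sum_congr rfl fun w _ => by rw [hc w]
      rw [hsum]
      ring

end Aux5

/-- For a transition kernel with independent transitions, the conditional
independence Xᵢ ⊥ S'ⱼ | ((S,A) \ {Xᵢ}) holds under one full-support consistent pmf iff it
holds under any other; hence the bipartite parent graph identified by the failure of this
conditional independence is the same for every consistent full-support distribution. -/
theorem fmdp_identified_graph_is_distribution_free
    {ns na : ℕ} (Sv : Fin ns → Type) (Av : Fin na → Type)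
    [∀ i, Fintype (Sv i)] [∀ i, DecidableEq (Sv i)] [∀ i, Nonempty (Sv i)]
    [∀ j, Fintype (Av j)] [∀ j, DecidableEq (Av j)] [∀ j, Nonempty (Av j)]
    (T : (∀ i, Sv i) → (∀ j, Av j) → (∀ k, Sv k) → ℝ)
    (hT0 : ∀ s a s', 0 ≤ T s a s') (hT1 : ∀ s a, ∑ s', T s a s' = 1)
    (Tj : ∀ k : Fin ns, (∀ i, Sv i) × (∀ j, Av j) → Sv k → ℝ)
    (hTj0 : ∀ k c y, 0 ≤ Tj k c y) (hTj1 : ∀ k c, ∑ y, Tj k c y = 1)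
    (hind : ∀ s a s', T s a s' = ∏ k, Tj k (s, a) (s' k))
    (p q : (∀ v, fv Sv Av v) → ℝ)
    (hppos : ∀ x, 0 < p x) (hpsum : ∑ x, p x = 1) (hpcons : FConsistent p T)
    (hqpos : ∀ x, 0 < q x) (hqsum : ∑ x, q x = 1) (hqcons : FConsistent q T) :
    (∀ (u : CurVar ns na) (k : Fin ns),
      CondIndep p {liftCur u} {(.inr (.inr k) : FVar ns na)}
        (curSet ns na \ {liftCur u}) ↔
      CondIndep q {liftCur u} {(.inr (.inr k) : FVar ns na)}
        (curSet ns na \ {liftCur u})) ∧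
    -- hence the identified bipartite parent graph is the same for p and q
    ((fun (u : CurVar ns na) (k : Fin ns) =>
        ¬ CondIndep p {liftCur u} {(.inr (.inr k) : FVar ns na)}
          (curSet ns na \ {liftCur u})) =
     (fun (u : CurVar ns na) (k : Fin ns) =>
        ¬ CondIndep q {liftCur u} {(.inr (.inr k) : FVar ns na)}
          (curSet ns na \ {liftCur u}))) := by

  have hiff : ∀ (u : CurVar ns na) (k : Fin ns),
      CondIndep p {liftCur u} {(.inr (.inr k) : FVar ns na)}
        (curSet ns na \ {liftCur u}) ↔
      CondIndep q {liftCur u} {(.inr (.inr k) : FVar ns na)}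
        (curSet ns na \ {liftCur u}) := fun u k =>
    (key p hppos hpcons hind hTj1 u k).trans (key q hqpos hqcons hind hTj1 u k).symm
  exact ⟨hiff, funext fun u => funext fun k => propext (not_congr (hiff u k))⟩
end
end

section
/- Consider an object-oriented FMDP with independent transitions whose transition kernel T satisfies result symmetry. Let O_a, O_b be instances of a common class C, let U be a field and V a state field of C. Let p be a full-support joint probability mass function on (S, A, S') consistent with T, and let q be the joint probability mass function whose current-step marginal is q(current = w) := p(current = σ_{ab}(w)) and which is consistent with the same transition kernel T. If the conditional independence O_a.U ⊥_p O_a.V' | ((S, A) \ {O_a.U}) holds, then O_b.U ⊥_q O_b.V' | ((S, A) \ {O_b.U}) holds. -/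
open Finset

noncomputable section

/-- The specification of an object-oriented FMDP: `K` classes, class `k` having `Nk k`
instances, state fields `SF k` and action fields `AF k`, with finite nonempty value types. -/
structure OOSpec where
  K : ℕ
  Nk : Fin K → ℕ
  SF : Fin K → Type
  AF : Fin K → Type
  SVal : ∀ k, SF k → Type
  AVal : ∀ k, AF k → Type
  finSF : ∀ k, Fintype (SF k)
  finAF : ∀ k, Fintype (AF k)
  deqSF : ∀ k, DecidableEq (SF k)
  deqAF : ∀ k, DecidableEq (AF k)
  finSVal : ∀ k u, Fintype (SVal k u)
  finAVal : ∀ k v, Fintype (AVal k v)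
  deqSVal : ∀ k u, DecidableEq (SVal k u)
  deqAVal : ∀ k v, DecidableEq (AVal k v)
  neSVal : ∀ k u, Nonempty (SVal k u)
  neAVal : ∀ k v, Nonempty (AVal k v)

attribute [instance] OOSpec.finSF OOSpec.finAF OOSpec.deqSF OOSpec.deqAF
  OOSpec.finSVal OOSpec.finAVal OOSpec.deqSVal OOSpec.deqAVal
  OOSpec.neSVal OOSpec.neAVal

namespace OOSpec

variable (σ : OOSpec)

/-- Objects: the `m`-th instance of class `k`. -/
abbrev ObjIdx := Σ k : Fin σ.K, Fin (σ.Nk k)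

/-- The fields of class `k`: state fields and action fields. -/
abbrev Fd (k : Fin σ.K) := σ.SF k ⊕ σ.AF k

/-- Value type of each field of class `k`. -/
def fval (k : Fin σ.K) : σ.Fd k → Type := Sum.elim (σ.SVal k) (σ.AVal k)

instance (k : Fin σ.K) : ∀ f : σ.Fd k, Fintype (σ.fval k f)
  | .inl u => inferInstanceAs (Fintype (σ.SVal k u))
  | .inr v => inferInstanceAs (Fintype (σ.AVal k v))

instance (k : Fin σ.K) : ∀ f : σ.Fd k, DecidableEq (σ.fval k f)
  | .inl u => inferInstanceAs (DecidableEq (σ.SVal k u))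
  | .inr v => inferInstanceAs (DecidableEq (σ.AVal k v))

/-- The attribute tuple of an instance of class `k`. -/
abbrev Obj (k : Fin σ.K) := ∀ f : σ.Fd k, σ.fval k f

/-- Current configurations: an attribute tuple for every object. -/
abbrev Cur := ∀ o : σ.ObjIdx, σ.Obj o.1

/-- Next-step configurations: values of all next-step state attributes. -/
abbrev Nxt := ∀ o : σ.ObjIdx, ∀ u : σ.SF o.1, σ.SVal o.1 u

theorem fst_swap (a b o : σ.ObjIdx) (h : a.1 = b.1) :
    (Equiv.swap a b o).1 = o.1 := by
  rcases eq_or_ne o a with rfl | ha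
  · rw [Equiv.swap_apply_left]; exact h.symm
  · rcases eq_or_ne o b with rfl | hb
    · rw [Equiv.swap_apply_right]; exact h
    · rw [Equiv.swap_apply_of_ne_of_ne ha hb]

/-- The involution σ_{ab} on current configurations exchanging the attribute tuples of
two instances `a` and `b` of a common class. -/
def swapCur (a b : σ.ObjIdx) (h : a.1 = b.1) (w : σ.Cur) : σ.Cur :=
  fun o => cast (congrArg σ.Obj (σ.fst_swap a b o h)) (w (Equiv.swap a b o))

/-- The conditional law, under `T`, of object `o`'s next-step state attributes at `w`. -/
def objLaw (T : σ.Cur → σ.Nxt → ℝ) (o : σ.ObjIdx) (w : σ.Cur)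
    (y : ∀ u : σ.SF o.1, σ.SVal o.1 u) : ℝ :=
  ∑ x' : σ.Nxt, if x' o = y then T w x' else 0

/-- The marginal of `T(· | w)` on the single next-step coordinate `O_o.u'`
(the coordinate kernel `T_{o,u}`). -/
def coordKer (T : σ.Cur → σ.Nxt → ℝ) (o : σ.ObjIdx) (u : σ.SF o.1) (w : σ.Cur)
    (y : σ.SVal o.1 u) : ℝ :=
  ∑ x' : σ.Nxt, if x' o u = y then T w x' else 0

/-- `T` has independent transitions: it factorizes over the next-step coordinates as the
product of its coordinate kernels. -/
def IndepTrans (T : σ.Cur → σ.Nxt → ℝ) : Prop :=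
  ∀ (w : σ.Cur) (x' : σ.Nxt),
    T w x' = ∏ ou : Σ o : σ.ObjIdx, σ.SF o.1, σ.coordKer T ou.1 ou.2 w (x' ou.1 ou.2)

/-- A function of the current configuration depends on the current-step coordinate
`O_j.f`: it takes different values at two configurations differing only in that coordinate. -/
def DependsOn {α : Type*} (κ : σ.Cur → α) (j : σ.ObjIdx) (f : σ.Fd j.1) : Prop :=
  ∃ w w' : σ.Cur,
    (∀ (o : σ.ObjIdx) (g : σ.Fd o.1),
      (⟨o, g⟩ : Σ o : σ.ObjIdx, σ.Fd o.1) ≠ ⟨j, f⟩ → w o g = w' o g) ∧ κ w ≠ κ w'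

/-- Result symmetry: instances of a common class transit by the same rule. -/
def ResultSym (T : σ.Cur → σ.Nxt → ℝ) : Prop :=
  ∀ (k : Fin σ.K) (m m' : Fin (σ.Nk k)) (w : σ.Cur) (y : ∀ u : σ.SF k, σ.SVal k u),
    σ.objLaw T ⟨k, m⟩ w y = σ.objLaw T ⟨k, m'⟩ (σ.swapCur ⟨k, m⟩ ⟨k, m'⟩ rfl w) y

/-- Causation symmetry: two other instances of a common class are interchangeable for the
transition of any object. -/
def CausSym (T : σ.Cur → σ.Nxt → ℝ) : Prop :=
  ∀ (i : σ.ObjIdx) (k : Fin σ.K) (m m' : Fin (σ.Nk k)),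
    (⟨k, m⟩ : σ.ObjIdx) ≠ i → (⟨k, m'⟩ : σ.ObjIdx) ≠ i →
    ∀ (w : σ.Cur) (y : ∀ u : σ.SF i.1, σ.SVal i.1 u),
      σ.objLaw T i w y = σ.objLaw T i (σ.swapCur ⟨k, m⟩ ⟨k, m'⟩ rfl w) y

end OOSpec

namespace OOSpec

variable (σ : OOSpec)

/-- Current-step coordinates: the attribute `O_o.f`. -/
abbrev CurV := Σ o : σ.ObjIdx, σ.Fd o.1

/-- Next-step coordinates: the attribute `O_o.u'`. -/
abbrev NxtV := Σ o : σ.ObjIdx, σ.SF o.1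

/-- All variables of the OO-FMDP. -/
abbrev Var := σ.CurV ⊕ σ.NxtV

/-- Value type of each variable. -/
def vval : σ.Var → Type
  | .inl v => σ.fval v.1.1 v.2
  | .inr v => σ.SVal v.1.1 v.2

instance : ∀ v : σ.Var, Fintype (σ.vval v)
  | .inl v => inferInstanceAs (Fintype (σ.fval v.1.1 v.2))
  | .inr v => inferInstanceAs (Fintype (σ.SVal v.1.1 v.2))

instance : ∀ v : σ.Var, DecidableEq (σ.vval v)
  | .inl v => inferInstanceAs (DecidableEq (σ.fval v.1.1 v.2))
  | .inr v => inferInstanceAs (DecidableEq (σ.SVal v.1.1 v.2))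

/-- Full configurations of all variables. -/
abbrev Cfg := ∀ v : σ.Var, σ.vval v

/-- The current configuration determined by a full configuration. -/
def curOf (d : σ.Cfg) : σ.Cur := fun o f => d (.inl ⟨o, f⟩)

/-- The next-step configuration determined by a full configuration. -/
def nxtOf (d : σ.Cfg) : σ.Nxt := fun o u => d (.inr ⟨o, u⟩)

/-- Building a full configuration from a current and a next configuration. -/
def mkCfg (w : σ.Cur) (x' : σ.Nxt) : σ.Cfg
  | .inl v => w v.1 v.2
  | .inr v => x' v.1 v.2

/-- The set of all current-step coordinates. -/
def curVars : Finset σ.Var := Finset.univ.image Sum.inl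

/-- A joint pmf on (S, A, S') is consistent with the transition kernel `T`. -/
def Consistent (p : σ.Cfg → ℝ) (T : σ.Cur → σ.Nxt → ℝ) : Prop :=
  ∀ d : σ.Cfg, p d = marg p σ.curVars d * T (σ.curOf d) (σ.nxtOf d)

end OOSpec

section Aux
variable {V' : Type*} [Fintype V'] [DecidableEq V'] {val : V' → Type*}
    [∀ v, Fintype (val v)] [∀ v, DecidableEq (val v)]

theorem marg_pos (p : (∀ v, val v) → ℝ) (hp : ∀ d, 0 < p d) (E : Finset V') (x : ∀ v, val v) :
    0 < marg p E x := by
  unfold marg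
  apply Finset.sum_pos'
  · intro y _
    split
    · exact (hp y).le
    · exact le_refl 0
  · exact ⟨x, Finset.mem_univ x, by simp [hp x]⟩

theorem marg_erase (p : (∀ v, val v) → ℝ) (E : Finset V') (v : V') (hv : v ∈ E)
    (x : ∀ v, val v) :
    marg p (E.erase v) x = ∑ ξ : val v, marg p E (Function.update x v ξ) := by
  unfold marg
  rw [Finset.sum_comm]
  refine Finset.sum_congr rfl fun y _ => ?_
  have key : ∀ ξ : val v, (∀ u ∈ E, y u = Function.update x v ξ u) ↔
      ((∀ u ∈ E.erase v, y u = x u) ∧ ξ = y v) := by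
    intro ξ
    constructor
    · intro h
      refine ⟨fun u hu => ?_, ?_⟩
      · rw [h u (Finset.mem_of_mem_erase hu), Function.update_of_ne (Finset.ne_of_mem_erase hu)]
      · rw [h v hv, Function.update_self]
    · rintro ⟨h, rfl⟩ u hu
      rcases eq_or_ne u v with rfl | hne
      · rw [Function.update_self]
      · rw [Function.update_of_ne hne]
        exact h u (Finset.mem_erase.mpr ⟨hne, hu⟩)
  simp only [key]
  have hsplit : ∀ ξ : val v,
      (if (∀ u ∈ E.erase v, y u = x u) ∧ ξ = y v then p y else 0) =
      if ξ = y v then (if (∀ u ∈ E.erase v, y u = x u) then p y else 0) else 0 := by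
    intro ξ
    by_cases h1 : ξ = y v <;> by_cases h2 : ∀ u ∈ E.erase v, y u = x u <;> simp [h1, h2]
  rw [Finset.sum_congr rfl fun ξ _ => hsplit ξ, Finset.sum_ite_eq' Finset.univ (y v)]
  simp

end Aux

namespace OOSpec

variable (σ : OOSpec)

def cfgEquiv : (σ.Cur × σ.Nxt) ≃ σ.Cfg where
  toFun z := σ.mkCfg z.1 z.2
  invFun d := (σ.curOf d, σ.nxtOf d)
  left_inv z := rfl
  right_inv d := by
    funext v
    cases v with
    | inl v => rfl
    | inr v => rfl

theorem sum_cfg (F : σ.Cfg → ℝ) :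
    ∑ d : σ.Cfg, F d = ∑ w : σ.Cur, ∑ n : σ.Nxt, F (σ.mkCfg w n) := by
  rw [← Equiv.sum_comp σ.cfgEquiv F, Fintype.sum_prod_type]
  rfl

theorem curOf_mkCfg (w : σ.Cur) (n : σ.Nxt) : σ.curOf (σ.mkCfg w n) = w := rfl

theorem nxtOf_mkCfg (w : σ.Cur) (n : σ.Nxt) : σ.nxtOf (σ.mkCfg w n) = n := rfl

theorem mem_curVars (v : σ.Var) : v ∈ σ.curVars ↔ ∃ c, v = Sum.inl c := by
  simp [OOSpec.curVars, eq_comm]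

theorem marg_curVars (p : σ.Cfg → ℝ) (d : σ.Cfg) :
    marg p σ.curVars d = ∑ n : σ.Nxt, p (σ.mkCfg (σ.curOf d) n) := by
  unfold marg
  rw [σ.sum_cfg]
  have key : ∀ (w : σ.Cur) (n : σ.Nxt),
      (∀ v ∈ σ.curVars, σ.mkCfg w n v = d v) ↔ w = σ.curOf d := by
    intro w n
    constructor
    · intro h
      funext o f
      exact h (Sum.inl ⟨o, f⟩) ((σ.mem_curVars _).mpr ⟨⟨o, f⟩, rfl⟩)
    · rintro rfl v hv
      obtain ⟨c, rfl⟩ := (σ.mem_curVars v).mp hv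
      rfl
  simp only [key]
  have hpull : ∀ w : σ.Cur,
      (∑ n : σ.Nxt, if w = σ.curOf d then p (σ.mkCfg w n) else 0) =
      if w = σ.curOf d then ∑ n : σ.Nxt, p (σ.mkCfg w n) else 0 := by
    intro w; split <;> simp
  rw [Finset.sum_congr rfl fun w _ => hpull w,
    Finset.sum_ite_eq' Finset.univ (σ.curOf d) (fun w => ∑ n : σ.Nxt, p (σ.mkCfg w n)),
    if_pos (Finset.mem_univ _)]

open Classical in
theorem marg_insert_nxt (p : σ.Cfg → ℝ) (o : σ.ObjIdx) (u : σ.SF o.1) (d : σ.Cfg) :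
    marg p (insert (Sum.inr ⟨o, u⟩) σ.curVars) d =
      ∑ n : σ.Nxt, if n o u = d (Sum.inr ⟨o, u⟩) then p (σ.mkCfg (σ.curOf d) n) else 0 := by
  unfold marg
  rw [σ.sum_cfg]
  have key : ∀ (w : σ.Cur) (n : σ.Nxt),
      (∀ v ∈ insert (Sum.inr ⟨o, u⟩) σ.curVars, σ.mkCfg w n v = d v) ↔
        (w = σ.curOf d ∧ n o u = d (Sum.inr ⟨o, u⟩)) := by
    intro w n
    rw [Finset.forall_mem_insert]
    constructor
    · rintro ⟨h1, h2⟩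
      refine ⟨?_, h1⟩
      funext o' f
      exact h2 (Sum.inl ⟨o', f⟩) ((σ.mem_curVars _).mpr ⟨⟨o', f⟩, rfl⟩)
    · rintro ⟨rfl, h1⟩
      refine ⟨h1, ?_⟩
      rintro v hv
      obtain ⟨c, rfl⟩ := (σ.mem_curVars v).mp hv
      rfl
  simp only [key]
  have hpull : ∀ w : σ.Cur,
      (∑ n : σ.Nxt, if w = σ.curOf d ∧ n o u = d (Sum.inr ⟨o, u⟩) then p (σ.mkCfg w n) else 0)
      = if w = σ.curOf d then
          (∑ n : σ.Nxt, if n o u = d (Sum.inr ⟨o, u⟩) then p (σ.mkCfg w n) else 0) else 0 := by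
    intro w
    by_cases hw : w = σ.curOf d <;> simp [hw]
  rw [Finset.sum_congr rfl fun w _ => hpull w,
    Finset.sum_ite_eq' Finset.univ (σ.curOf d)
      (fun w => ∑ n : σ.Nxt, if n o u = d (Sum.inr ⟨o, u⟩) then p (σ.mkCfg w n) else 0),
    if_pos (Finset.mem_univ _)]

theorem marg_insert_eq (T : σ.Cur → σ.Nxt → ℝ) (p : σ.Cfg → ℝ) (hp : σ.Consistent p T)
    (o : σ.ObjIdx) (u : σ.SF o.1) (d : σ.Cfg) :
    marg p (insert (Sum.inr ⟨o, u⟩) σ.curVars) d =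
      marg p σ.curVars d * σ.coordKer T o u (σ.curOf d) (d (Sum.inr ⟨o, u⟩)) := by
  rw [σ.marg_insert_nxt]
  have h1 : ∀ n : σ.Nxt,
      p (σ.mkCfg (σ.curOf d) n) = marg p σ.curVars d * T (σ.curOf d) n := by
    intro n
    have hm : marg p σ.curVars (σ.mkCfg (σ.curOf d) n) = marg p σ.curVars d := by
      rw [σ.marg_curVars, σ.marg_curVars, σ.curOf_mkCfg]
    rw [hp (σ.mkCfg (σ.curOf d) n), hm, σ.curOf_mkCfg, σ.nxtOf_mkCfg]
  unfold OOSpec.coordKer; rw [Finset.mul_sum]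
  refine Finset.sum_congr rfl fun n _ => ?_
  rw [h1]
  split <;> simp

theorem coordKer_eq_objLaw (T : σ.Cur → σ.Nxt → ℝ) (o : σ.ObjIdx) (u : σ.SF o.1)
    (w : σ.Cur) (y : σ.SVal o.1 u) :
    σ.coordKer T o u w y =
      ∑ z : (∀ v : σ.SF o.1, σ.SVal o.1 v), if z u = y then σ.objLaw T o w z else 0 := by
  unfold OOSpec.coordKer OOSpec.objLaw
  have h1 : ∀ z : (∀ v : σ.SF o.1, σ.SVal o.1 v),
      (if z u = y then (∑ x' : σ.Nxt, if x' o = z then T w x' else 0) else 0) =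
      ∑ x' : σ.Nxt, if z u = y then (if x' o = z then T w x' else 0) else 0 := by
    intro z; split <;> simp
  rw [Finset.sum_congr rfl fun z _ => h1 z, Finset.sum_comm]
  refine Finset.sum_congr rfl fun x' _ => ?_
  have h2 : ∀ z : (∀ v : σ.SF o.1, σ.SVal o.1 v),
      (if z u = y then (if x' o = z then T w x' else 0) else 0) =
      if z = x' o then (if x' o u = y then T w x' else 0) else 0 := by
    intro z
    rcases eq_or_ne z (x' o) with rfl | hz
    · simp
    · simp [hz, Ne.symm hz]
  rw [Finset.sum_congr rfl fun z _ => h2 z,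
    Finset.sum_ite_eq' Finset.univ (x' o) (fun _ => if x' o u = y then T w x' else 0),
    if_pos (Finset.mem_univ _)]

theorem swapCur_heq (a b o : σ.ObjIdx) (h : a.1 = b.1) (w : σ.Cur) :
    HEq (σ.swapCur a b h w o) (w (Equiv.swap a b o)) := by
  simp only [OOSpec.swapCur]
  exact cast_heq _ _

theorem swapCur_apply_left (k : Fin σ.K) (m m' : Fin (σ.Nk k)) (w : σ.Cur) :
    σ.swapCur ⟨k, m⟩ ⟨k, m'⟩ rfl w ⟨k, m⟩ = w ⟨k, m'⟩ :=
  eq_of_heq ((σ.swapCur_heq ⟨k, m⟩ ⟨k, m'⟩ ⟨k, m⟩ rfl w).trans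
    (congr_arg_heq w (Equiv.swap_apply_left (⟨k, m⟩ : σ.ObjIdx) ⟨k, m'⟩)))

theorem swapCur_apply_right (k : Fin σ.K) (m m' : Fin (σ.Nk k)) (w : σ.Cur) :
    σ.swapCur ⟨k, m⟩ ⟨k, m'⟩ rfl w ⟨k, m'⟩ = w ⟨k, m⟩ :=
  eq_of_heq ((σ.swapCur_heq ⟨k, m⟩ ⟨k, m'⟩ ⟨k, m'⟩ rfl w).trans
    (congr_arg_heq w (Equiv.swap_apply_right (⟨k, m⟩ : σ.ObjIdx) ⟨k, m'⟩)))

theorem swapCur_apply_other (k : Fin σ.K) (m m' : Fin (σ.Nk k)) (w : σ.Cur)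
    (o : σ.ObjIdx) (h1 : o ≠ ⟨k, m⟩) (h2 : o ≠ ⟨k, m'⟩) :
    σ.swapCur ⟨k, m⟩ ⟨k, m'⟩ rfl w o = w o :=
  eq_of_heq ((σ.swapCur_heq ⟨k, m⟩ ⟨k, m'⟩ o rfl w).trans
    (congr_arg_heq w (Equiv.swap_apply_of_ne_of_ne h1 h2)))

theorem swapCur_comm (k : Fin σ.K) (m m' : Fin (σ.Nk k)) (w : σ.Cur) :
    σ.swapCur ⟨k, m'⟩ ⟨k, m⟩ rfl w = σ.swapCur ⟨k, m⟩ ⟨k, m'⟩ rfl w := by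
  funext o
  refine eq_of_heq (((σ.swapCur_heq ⟨k, m'⟩ ⟨k, m⟩ o rfl w).trans
    (congr_arg_heq w ?_)).trans (σ.swapCur_heq ⟨k, m⟩ ⟨k, m'⟩ o rfl w).symm)
  rw [Equiv.swap_comm]

theorem var_ne_of_obj_ne {o o' : σ.ObjIdx} (h : o ≠ o') (f : σ.Fd o.1) (g : σ.Fd o'.1) :
    (Sum.inl ⟨o, f⟩ : σ.Var) ≠ Sum.inl ⟨o', g⟩ := fun hc =>
  h (congrArg Sigma.fst (Sum.inl.inj hc))

theorem curOf_update_inr (d : σ.Cfg) (c : σ.NxtV) (z : σ.vval (Sum.inr c)) :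
    σ.curOf (Function.update d (Sum.inr c) z) = σ.curOf d := by
  funext o f
  exact Function.update_of_ne (by simp) _ _

theorem curOf_update_inl_congr {d d' : σ.Cfg} (h : σ.curOf d = σ.curOf d')
    (c : σ.CurV) (ξ : σ.vval (Sum.inl c)) :
    σ.curOf (Function.update d (Sum.inl c) ξ) = σ.curOf (Function.update d' (Sum.inl c) ξ) := by
  funext o f
  show Function.update d (Sum.inl c) ξ (Sum.inl ⟨o, f⟩)
      = Function.update d' (Sum.inl c) ξ (Sum.inl ⟨o, f⟩)
  by_cases h2 : (Sum.inl ⟨o, f⟩ : σ.Var) = Sum.inl c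
  · obtain rfl : c = ⟨o, f⟩ := (Sum.inl.inj h2).symm
    rw [Function.update_self, Function.update_self]
  · rw [Function.update_of_ne h2, Function.update_of_ne h2]
    exact congrFun (congrFun h o) f

theorem swap_curOf_update (k : Fin σ.K) (m m' : Fin (σ.Nk k)) (U : σ.Fd k)
    (x : σ.Cfg) (ξ : σ.vval (Sum.inl ⟨⟨k, m'⟩, U⟩)) :
    σ.swapCur ⟨k, m⟩ ⟨k, m'⟩ rfl (σ.curOf (Function.update x (Sum.inl ⟨⟨k, m'⟩, U⟩) ξ)) =
      σ.curOf (Function.update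
        (σ.mkCfg (σ.swapCur ⟨k, m⟩ ⟨k, m'⟩ rfl (σ.curOf x)) (σ.nxtOf x))
        (Sum.inl ⟨⟨k, m⟩, U⟩) ξ) := by
  funext o f
  rcases eq_or_ne o (⟨k, m⟩ : σ.ObjIdx) with rfl | hoa
  · rw [σ.swapCur_apply_left]
    show Function.update x (Sum.inl ⟨⟨k, m'⟩, U⟩) ξ (Sum.inl ⟨⟨k, m'⟩, f⟩)
        = Function.update (σ.mkCfg (σ.swapCur ⟨k, m⟩ ⟨k, m'⟩ rfl (σ.curOf x)) (σ.nxtOf x))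
            (Sum.inl ⟨⟨k, m⟩, U⟩) ξ (Sum.inl ⟨⟨k, m⟩, f⟩)
    rcases eq_or_ne f U with rfl | hf
    · erw [Function.update_self, Function.update_self]
    · have hne1 : (Sum.inl ⟨⟨k, m'⟩, f⟩ : σ.Var) ≠ Sum.inl ⟨⟨k, m'⟩, U⟩ := by
        intro hc; exact hf (by simpa using hc)
      have hne2 : (Sum.inl ⟨⟨k, m⟩, f⟩ : σ.Var) ≠ Sum.inl ⟨⟨k, m⟩, U⟩ := by
        intro hc; exact hf (by simpa using hc)
      erw [Function.update_of_ne hne1, Function.update_of_ne hne2]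
      show x (Sum.inl ⟨⟨k, m'⟩, f⟩) = σ.swapCur ⟨k, m⟩ ⟨k, m'⟩ rfl (σ.curOf x) ⟨k, m⟩ f
      rw [σ.swapCur_apply_left]
      rfl
  · rcases eq_or_ne o (⟨k, m'⟩ : σ.ObjIdx) with rfl | hob
    · rw [σ.swapCur_apply_right]
      show Function.update x (Sum.inl ⟨⟨k, m'⟩, U⟩) ξ (Sum.inl ⟨⟨k, m⟩, f⟩)
          = Function.update (σ.mkCfg (σ.swapCur ⟨k, m⟩ ⟨k, m'⟩ rfl (σ.curOf x)) (σ.nxtOf x))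
              (Sum.inl ⟨⟨k, m⟩, U⟩) ξ (Sum.inl ⟨⟨k, m'⟩, f⟩)
      erw [Function.update_of_ne (σ.var_ne_of_obj_ne (Ne.symm hoa) f U),
        Function.update_of_ne (σ.var_ne_of_obj_ne hoa f U)]
      show x (Sum.inl ⟨⟨k, m⟩, f⟩)
          = σ.swapCur ⟨k, m⟩ ⟨k, m'⟩ rfl (σ.curOf x) ⟨k, m'⟩ f
      rw [σ.swapCur_apply_right]
      rfl
    · rw [σ.swapCur_apply_other k m m' _ o hoa hob]
      show Function.update x (Sum.inl ⟨⟨k, m'⟩, U⟩) ξ (Sum.inl ⟨o, f⟩)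
          = Function.update (σ.mkCfg (σ.swapCur ⟨k, m⟩ ⟨k, m'⟩ rfl (σ.curOf x)) (σ.nxtOf x))
              (Sum.inl ⟨⟨k, m⟩, U⟩) ξ (Sum.inl ⟨o, f⟩)
      erw [Function.update_of_ne (σ.var_ne_of_obj_ne hob f U),
        Function.update_of_ne (σ.var_ne_of_obj_ne hoa f U)]
      show x (Sum.inl ⟨o, f⟩) = σ.swapCur ⟨k, m⟩ ⟨k, m'⟩ rfl (σ.curOf x) o f
      rw [σ.swapCur_apply_other k m m' _ o hoa hob]
      rfl

theorem ci_reduce (T : σ.Cur → σ.Nxt → ℝ) (r : σ.Cfg → ℝ) (hr : σ.Consistent r T)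
    (j : σ.ObjIdx) (U' : σ.Fd j.1) (V' : σ.SF j.1) :
    CondIndep r {Sum.inl ⟨j, U'⟩} {Sum.inr ⟨j, V'⟩} (σ.curVars \ {Sum.inl ⟨j, U'⟩}) ↔
      ∀ x : σ.Cfg,
        (marg r σ.curVars x * σ.coordKer T j V' (σ.curOf x) (x (Sum.inr ⟨j, V'⟩))) *
            (∑ ξ : σ.vval (Sum.inl ⟨j, U'⟩),
              marg r σ.curVars (Function.update x (Sum.inl ⟨j, U'⟩) ξ)) =
          marg r σ.curVars x *
            ∑ ξ : σ.vval (Sum.inl ⟨j, U'⟩),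
              marg r σ.curVars (Function.update x (Sum.inl ⟨j, U'⟩) ξ) *
                σ.coordKer T j V' (σ.curOf (Function.update x (Sum.inl ⟨j, U'⟩) ξ))
                  (x (Sum.inr ⟨j, V'⟩)) := by
  have hX : (Sum.inl ⟨j, U'⟩ : σ.Var) ∈ σ.curVars := (σ.mem_curVars _).mpr ⟨_, rfl⟩
  have hYX : (Sum.inr ⟨j, V'⟩ : σ.Var) ≠ Sum.inl ⟨j, U'⟩ := by simp
  have s1 : (({Sum.inl ⟨j, U'⟩} : Finset σ.Var) ∪ {Sum.inr ⟨j, V'⟩})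
      ∪ (σ.curVars \ {Sum.inl ⟨j, U'⟩}) = insert (Sum.inr ⟨j, V'⟩) σ.curVars := by
    ext v
    simp only [Finset.mem_union, Finset.mem_sdiff, Finset.mem_singleton, Finset.mem_insert]
    constructor
    · rintro ((rfl | rfl) | ⟨h, _⟩)
      · exact Or.inr hX
      · exact Or.inl rfl
      · exact Or.inr h
    · rintro (rfl | h)
      · exact Or.inl (Or.inr rfl)
      · by_cases hv : v = Sum.inl ⟨j, U'⟩
        · exact Or.inl (Or.inl hv)
        · exact Or.inr ⟨h, hv⟩
  have s2 : ({Sum.inl ⟨j, U'⟩} : Finset σ.Var) ∪ (σ.curVars \ {Sum.inl ⟨j, U'⟩})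
      = σ.curVars := by
    ext v
    simp only [Finset.mem_union, Finset.mem_sdiff, Finset.mem_singleton]
    constructor
    · rintro (rfl | ⟨h, _⟩)
      · exact hX
      · exact h
    · intro h
      by_cases hv : v = Sum.inl ⟨j, U'⟩
      · exact Or.inl hv
      · exact Or.inr ⟨h, hv⟩
  have s3 : ({Sum.inr ⟨j, V'⟩} : Finset σ.Var) ∪ (σ.curVars \ {Sum.inl ⟨j, U'⟩})
      = (insert (Sum.inr ⟨j, V'⟩) σ.curVars).erase (Sum.inl ⟨j, U'⟩) := by
    ext v
    simp only [Finset.mem_union, Finset.mem_sdiff, Finset.mem_singleton, Finset.mem_erase,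
      Finset.mem_insert]
    constructor
    · rintro (rfl | ⟨h, hv⟩)
      · exact ⟨hYX, Or.inl rfl⟩
      · exact ⟨hv, Or.inr h⟩
    · rintro ⟨hv, rfl | h⟩
      · exact Or.inl rfl
      · exact Or.inr ⟨h, hv⟩
  have s4 : σ.curVars \ {Sum.inl ⟨j, U'⟩} = σ.curVars.erase (Sum.inl ⟨j, U'⟩) :=
    Finset.sdiff_singleton_eq_erase _ _
  unfold CondIndep
  apply forall_congr'
  intro x
  rw [s1, s2, s3, s4, σ.marg_insert_eq T r hr,
    marg_erase r σ.curVars (Sum.inl ⟨j, U'⟩) hX x,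
    marg_erase r (insert (Sum.inr ⟨j, V'⟩) σ.curVars) (Sum.inl ⟨j, U'⟩)
      (Finset.mem_insert_of_mem hX) x]
  have hupd : ∀ ξ : σ.vval (Sum.inl ⟨j, U'⟩),
      marg r (insert (Sum.inr ⟨j, V'⟩) σ.curVars) (Function.update x (Sum.inl ⟨j, U'⟩) ξ)
      = marg r σ.curVars (Function.update x (Sum.inl ⟨j, U'⟩) ξ) *
          σ.coordKer T j V' (σ.curOf (Function.update x (Sum.inl ⟨j, U'⟩) ξ))
            (x (Sum.inr ⟨j, V'⟩)) := by
    intro ξ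
    rw [σ.marg_insert_eq T r hr, Function.update_of_ne hYX]
  rw [Finset.sum_congr rfl fun ξ _ => hupd ξ]

end OOSpec

open OOSpec in
/-- In an OO-FMDP with independent transitions and result symmetry, if
`q` is the joint pmf whose current-step marginal is the σ_{ab}-pushforward of that of `p`
and which is consistent with the same kernel, then the conditional independence
O_a.U ⊥_p O_a.V' | ((S,A) \ {O_a.U}) transfers to O_b.U ⊥_q O_b.V' | ((S,A) \ {O_b.U}). -/
theorem oo_fmdp_local_ci_transfers_by_result_symmetry
    (σ : OOSpec) (T : σ.Cur → σ.Nxt → ℝ)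
    (hT0 : ∀ w x', 0 ≤ T w x') (hT1 : ∀ w, ∑ x', T w x' = 1)
    (hind : σ.IndepTrans T) (hres : σ.ResultSym T)
    (k : Fin σ.K) (m m' : Fin (σ.Nk k)) (U : σ.Fd k) (V : σ.SF k)
    (p q : σ.Cfg → ℝ)
    (hppos : ∀ d, 0 < p d) (hpsum : ∑ d, p d = 1) (hpcons : σ.Consistent p T)
    (hqcons : σ.Consistent q T)
    -- q(current = w) = p(current = σ_{ab}(w))
    (hqmarg : ∀ d : σ.Cfg, marg q σ.curVars d =
      marg p σ.curVars (σ.mkCfg (σ.swapCur ⟨k, m⟩ ⟨k, m'⟩ rfl (σ.curOf d)) (σ.nxtOf d)))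
    (hci : CondIndep p {Sum.inl ⟨⟨k, m⟩, U⟩} {Sum.inr ⟨⟨k, m⟩, V⟩}
      (σ.curVars \ {Sum.inl ⟨⟨k, m⟩, U⟩})) :
    CondIndep q {Sum.inl ⟨⟨k, m'⟩, U⟩} {Sum.inr ⟨⟨k, m'⟩, V⟩}
      (σ.curVars \ {Sum.inl ⟨⟨k, m'⟩, U⟩}) := by
  have hredp := σ.ci_reduce T p hpcons ⟨k, m⟩ U V
  have hredq := σ.ci_reduce T q hqcons ⟨k, m'⟩ U V
  have hstar := hredp.mp hci
  have hCpos : ∀ x : σ.Cfg, 0 < marg p σ.curVars x := fun x => marg_pos p hppos _ x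
  have hstar' : ∀ x : σ.Cfg,
      σ.coordKer T ⟨k, m⟩ V (σ.curOf x) (x (Sum.inr ⟨⟨k, m⟩, V⟩)) *
        (∑ ξ : σ.vval (Sum.inl ⟨⟨k, m⟩, U⟩),
          marg p σ.curVars (Function.update x (Sum.inl ⟨⟨k, m⟩, U⟩) ξ)) =
      ∑ ξ : σ.vval (Sum.inl ⟨⟨k, m⟩, U⟩),
        marg p σ.curVars (Function.update x (Sum.inl ⟨⟨k, m⟩, U⟩) ξ) *
          σ.coordKer T ⟨k, m⟩ V (σ.curOf (Function.update x (Sum.inl ⟨⟨k, m⟩, U⟩) ξ))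
            (x (Sum.inr ⟨⟨k, m⟩, V⟩)) := by
    intro x
    have h := hstar x
    rw [mul_assoc] at h
    exact mul_left_cancel₀ (hCpos x).ne' h
  have hne : Nonempty (σ.vval (Sum.inl ⟨⟨k, m⟩, U⟩)) := by
    show Nonempty (σ.fval k U)
    cases U with
    | inl u => exact σ.neSVal k u
    | inr v0 => exact σ.neAVal k v0
  have hSpos : ∀ x : σ.Cfg,
      0 < ∑ ξ : σ.vval (Sum.inl ⟨⟨k, m⟩, U⟩),
        marg p σ.curVars (Function.update x (Sum.inl ⟨⟨k, m⟩, U⟩) ξ) := by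
    intro x
    haveI := hne
    exact Finset.sum_pos (fun ξ _ => marg_pos p hppos _ _) Finset.univ_nonempty
  have hF4 : ∀ (d : σ.Cfg) (ξ0 : σ.vval (Sum.inl ⟨⟨k, m⟩, U⟩)) (y : σ.SVal k V),
      σ.coordKer T ⟨k, m⟩ V (σ.curOf (Function.update d (Sum.inl ⟨⟨k, m⟩, U⟩) ξ0)) y =
        σ.coordKer T ⟨k, m⟩ V (σ.curOf d) y := by
    intro d ξ0 y
    set x : σ.Cfg := Function.update d (Sum.inr ⟨⟨k, m⟩, V⟩) y with hxdef
    have hxY : x (Sum.inr ⟨⟨k, m⟩, V⟩) = y := Function.update_self _ _ _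
    have hxcur : σ.curOf x = σ.curOf d := σ.curOf_update_inr d ⟨⟨k, m⟩, V⟩ y
    have e1 := hstar' x
    have e2 := hstar' (Function.update x (Sum.inl ⟨⟨k, m⟩, U⟩) ξ0)
    simp only [Function.update_idem] at e2
    have hYeq : (Function.update x (Sum.inl ⟨⟨k, m⟩, U⟩) ξ0) (Sum.inr ⟨⟨k, m⟩, V⟩) = y := by
      rw [Function.update_of_ne (by simp), hxY]
    rw [hYeq] at e2
    rw [hxY] at e1
    have hc := mul_right_cancel₀ (hSpos x).ne' (e1.trans e2.symm)
    rw [← σ.curOf_update_inl_congr hxcur ⟨⟨k, m⟩, U⟩ ξ0, ← hxcur]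
    exact hc.symm
  have hkb : ∀ (w : σ.Cur) (y : σ.SVal k V),
      σ.coordKer T ⟨k, m'⟩ V w y =
        σ.coordKer T ⟨k, m⟩ V (σ.swapCur ⟨k, m⟩ ⟨k, m'⟩ rfl w) y := by
    intro w y
    rw [σ.coordKer_eq_objLaw, σ.coordKer_eq_objLaw]
    refine Finset.sum_congr rfl fun z _ => ?_
    have h2 : σ.objLaw T ⟨k, m'⟩ w z
        = σ.objLaw T ⟨k, m⟩ (σ.swapCur ⟨k, m⟩ ⟨k, m'⟩ rfl w) z := by
      rw [hres k m' m w z, σ.swapCur_comm]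
    rw [h2]
  have hconstb : ∀ (x : σ.Cfg) (ξ : σ.vval (Sum.inl ⟨⟨k, m'⟩, U⟩)),
      σ.coordKer T ⟨k, m'⟩ V (σ.curOf (Function.update x (Sum.inl ⟨⟨k, m'⟩, U⟩) ξ))
          (x (Sum.inr ⟨⟨k, m'⟩, V⟩)) =
        σ.coordKer T ⟨k, m'⟩ V (σ.curOf x) (x (Sum.inr ⟨⟨k, m'⟩, V⟩)) := by
    intro x ξ
    erw [hkb, hkb, σ.swap_curOf_update k m m' U x ξ, hF4, σ.curOf_mkCfg]
  apply hredq.mpr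
  intro x
  have hsimp : ∀ ξ : σ.vval (Sum.inl ⟨⟨k, m'⟩, U⟩),
      marg q σ.curVars (Function.update x (Sum.inl ⟨⟨k, m'⟩, U⟩) ξ) *
        σ.coordKer T ⟨k, m'⟩ V (σ.curOf (Function.update x (Sum.inl ⟨⟨k, m'⟩, U⟩) ξ))
          (x (Sum.inr ⟨⟨k, m'⟩, V⟩)) =
      marg q σ.curVars (Function.update x (Sum.inl ⟨⟨k, m'⟩, U⟩) ξ) *
        σ.coordKer T ⟨k, m'⟩ V (σ.curOf x) (x (Sum.inr ⟨⟨k, m'⟩, V⟩)) :=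
    fun ξ => by rw [hconstb x ξ]
  rw [Finset.sum_congr rfl fun ξ _ => hsimp ξ, ← Finset.sum_mul]
  ring
end
end
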